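/- Let n, N ≥ 1, let M_1, …, M_N be positive semidefinite real symmetric n×n matrices with trace(M_i) ≤ C for all i and some C > 0, and for w ∈ ℝ^N define F(w) = ∑_i w_i M_i. Let λ_min > 0 and suppose w, w' ∈ Δ^N are such that both F(w) and F(w') are positive definite with smallest eigenvalue at least λ_min (equivalently F(w) ⪰ λ_min I and F(w') ⪰ λ_min I). Then |log det F(w') − log det F(w)| ≤ (C/λ_min) · ∑_i |w'_i − w_i|. -/

import Mathlib

open Matrix
open scoped MatrixOrder


lemma my_trace_eq_sum_eigenvalues {m : ℕ} {A : Matrix (Fin m) (Fin m) ℝ}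
    (hA : A.IsHermitian) : A.trace = ∑ i, hA.eigenvalues i := by
  conv_lhs => rw [hA.spectral_theorem]
  rw [Unitary.conjStarAlgAut_apply, Matrix.trace_mul_cycle]
  rw [Unitary.coe_star_mul_self, one_mul, Matrix.trace_diagonal]
  simp

lemma my_logdet_le {m : ℕ} {X : Matrix (Fin m) (Fin m) ℝ} (hX : X.PosDef) :
    Real.log X.det ≤ X.trace - m := by
  have hev := hX.eigenvalues_pos
  rw [hX.isHermitian.det_eq_prod_eigenvalues, my_trace_eq_sum_eigenvalues hX.isHermitian]
  simp only [RCLike.ofReal_real_eq_id, id_eq]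
  rw [Real.log_prod (fun i _ => (hev i).ne')]
  have : ∀ i ∈ Finset.univ, Real.log (hX.isHermitian.eigenvalues i) ≤
      hX.isHermitian.eigenvalues i - 1 := fun i _ => Real.log_le_sub_one_of_pos (hev i)
  calc ∑ i, Real.log (hX.isHermitian.eigenvalues i)
      ≤ ∑ i, (hX.isHermitian.eigenvalues i - 1) := Finset.sum_le_sum this
    _ = (∑ i, hX.isHermitian.eigenvalues i) - m := by
        rw [Finset.sum_sub_distrib]; simp

section
variable {m : ℕ} {A : Matrix (Fin m) (Fin m) ℝ} {lmin : ℝ}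

lemma my_posdef_of_bound (hA : A.IsHermitian) (hlmin : 0 < lmin)
    (h : ∀ x : Fin m → ℝ, lmin * (∑ k, x k ^ 2) ≤ x ⬝ᵥ A *ᵥ x) : A.PosDef := by
  refine Matrix.PosDef.of_dotProduct_mulVec_pos hA fun x hx => ?_
  have hxs : 0 < ∑ k, x k ^ 2 := by
    have : ∃ k, x k ≠ 0 := by
      by_contra hc
      push_neg at hc
      exact hx (funext hc)
    obtain ⟨k, hk⟩ := this
    exact Finset.sum_pos' (fun i _ => sq_nonneg _)
      ⟨k, Finset.mem_univ k, by positivity⟩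
  calc (0:ℝ) < lmin * (∑ k, x k ^ 2) := by positivity
    _ ≤ x ⬝ᵥ A *ᵥ x := h x
    _ = star x ⬝ᵥ A *ᵥ x := by simp

lemma my_inv_quad_bound (hA : A.IsHermitian) (hlmin : 0 < lmin)
    (h : ∀ x : Fin m → ℝ, lmin * (∑ k, x k ^ 2) ≤ x ⬝ᵥ A *ᵥ x) (y : Fin m → ℝ) :
    0 ≤ y ⬝ᵥ A⁻¹ *ᵥ y ∧ y ⬝ᵥ A⁻¹ *ᵥ y ≤ (1/lmin) * ∑ k, y k ^ 2 := by
  have hPD : A.PosDef := my_posdef_of_bound hA hlmin h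
  have hdet : IsUnit A.det := isUnit_iff_ne_zero.2 hPD.det_pos.ne'
  set z := A⁻¹ *ᵥ y with hz
  have hAz : A *ᵥ z = y := by
    rw [hz, mulVec_mulVec, Matrix.mul_nonsing_inv _ hdet, one_mulVec]
  have hp : y ⬝ᵥ z = z ⬝ᵥ A *ᵥ z := by rw [← hAz, dotProduct_comm]
  have hzs : (0:ℝ) ≤ ∑ k, z k ^ 2 := Finset.sum_nonneg fun i _ => sq_nonneg _
  have hys : (0:ℝ) ≤ ∑ k, y k ^ 2 := Finset.sum_nonneg fun i _ => sq_nonneg _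
  have hlow : lmin * (∑ k, z k ^ 2) ≤ y ⬝ᵥ z := hp ▸ h z
  have hp0 : 0 ≤ y ⬝ᵥ z := le_trans (by positivity) hlow
  have hcs : (y ⬝ᵥ z) ^ 2 ≤ (∑ k, y k ^ 2) * (∑ k, z k ^ 2) := by
    have h2 := Finset.sum_mul_sq_le_sq_mul_sq Finset.univ y z
    calc (y ⬝ᵥ z)^2 = (∑ k, y k * z k)^2 := by rw [dotProduct]
      _ ≤ (∑ k, y k ^ 2) * (∑ k, z k ^ 2) := h2
  constructor
  · exact hp0
  · rcases eq_or_lt_of_le hp0 with hp' | hp'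
    · rw [← hp']; positivity
    · rw [div_mul_eq_mul_div, le_div_iff₀ hlmin]
      nlinarith [hcs, hlow, hzs, hys]

end

section
variable {m : ℕ} {A P : Matrix (Fin m) (Fin m) ℝ} {lmin : ℝ}

-- diag entries of S * A⁻¹ * S as quadratic forms
lemma my_trace_inv_mul_bound (hA : A.IsHermitian) (hlmin : 0 < lmin)
    (h : ∀ x : Fin m → ℝ, lmin * (∑ k, x k ^ 2) ≤ x ⬝ᵥ A *ᵥ x)
    (hP : P.PosSemidef) :
    0 ≤ (A⁻¹ * P).trace ∧ (A⁻¹ * P).trace ≤ (1/lmin) * P.trace := by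
  set S := CFC.sqrt P with hS
  have hSh : S.IsHermitian := (Matrix.nonneg_iff_posSemidef.mp (CFC.sqrt_nonneg P)).1
  have hPS : S * S = P := CFC.sqrt_mul_sqrt_self P (Matrix.nonneg_iff_posSemidef.mpr hP)
  have htr : (A⁻¹ * P).trace = (S * A⁻¹ * S).trace := by
    rw [← hPS, ← Matrix.mul_assoc, Matrix.trace_mul_cycle]
  have hdiag : ∀ j, (S * A⁻¹ * S) j j = (fun k => S k j) ⬝ᵥ A⁻¹ *ᵥ (fun k => S k j) := by
    intro j
    simp only [Matrix.mul_apply, dotProduct, mulVec, dotProduct, Finset.sum_mul,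
      Finset.mul_sum]
    rw [Finset.sum_comm]
    refine Finset.sum_congr rfl fun k _ => Finset.sum_congr rfl fun l _ => ?_
    have hsym : S j k = S k j := hSh.apply k j ▸ rfl
    rw [hsym]; ring
  have hq := fun j => my_inv_quad_bound hA hlmin h (fun k => S k j)
  have htrP : P.trace = ∑ j, ∑ k, (S k j) ^ 2 := by
    rw [← hPS, Matrix.trace]
    refine Finset.sum_congr rfl fun j _ => ?_
    rw [Matrix.diag, Matrix.mul_apply]
    refine Finset.sum_congr rfl fun k _ => ?_
    have hsym : S j k = S k j := hSh.apply k j ▸ rfl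
    rw [hsym]; ring
  constructor
  · rw [htr, Matrix.trace]
    exact Finset.sum_nonneg fun j _ => by rw [Matrix.diag, hdiag j]; exact (hq j).1
  · rw [htr, Matrix.trace, htrP, Finset.mul_sum]
    exact Finset.sum_le_sum fun j _ => by rw [Matrix.diag, hdiag j]; exact (hq j).2

end

section
variable {m : ℕ}

-- congruence preserves PosDef
lemma my_logdet_diff_le {A B : Matrix (Fin m) (Fin m) ℝ}
    (hA : A.PosDef) (hB : B.PosDef) :
    Real.log B.det - Real.log A.det ≤ (A⁻¹ * B).trace - m := by
  have hdetA : (0:ℝ) < A.det := hA.det_pos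
  have hdetB : (0:ℝ) < B.det := hB.det_pos
  set R := CFC.sqrt A with hRdef
  have hRh : R.IsHermitian := (Matrix.nonneg_iff_posSemidef.mp (CFC.sqrt_nonneg A)).1
  have hRR : R * R = A := CFC.sqrt_mul_sqrt_self A (Matrix.nonneg_iff_posSemidef.mpr hA.posSemidef)
  have hdetR : R.det ≠ 0 := by
    intro h0
    rw [← hRR, Matrix.det_mul, h0, mul_zero] at hdetA
    exact lt_irrefl _ hdetA
  have hRu : IsUnit R.det := isUnit_iff_ne_zero.2 hdetR
  have hRinv : R⁻¹ * R⁻¹ = A⁻¹ := by rw [← Matrix.mul_inv_rev, hRR]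
  have hRih : R⁻¹.IsHermitian := hRh.inv
  set X := R⁻¹ * B * R⁻¹ with hXdef
  have hXh : X.IsHermitian := by
    rw [Matrix.IsHermitian, hXdef, Matrix.conjTranspose_mul, Matrix.conjTranspose_mul,
      hRih.eq, hB.isHermitian.eq, Matrix.mul_assoc]
  have hXpd : X.PosDef := by
    refine Matrix.PosDef.of_dotProduct_mulVec_pos hXh fun x hx => ?_
    have hy : R⁻¹ *ᵥ x ≠ 0 := by
      intro h0
      apply hx
      have := congrArg (R *ᵥ ·) h0
      simpa [Matrix.mulVec_mulVec, Matrix.mul_nonsing_inv _ hRu] using this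
    have hvm : x ᵥ* R⁻¹ = R⁻¹ *ᵥ x := by
      conv_rhs => rw [show R⁻¹ *ᵥ x = star (R⁻¹ *ᵥ x) from (star_trivial _).symm]
      rw [Matrix.star_mulVec, hRih.eq, star_trivial]
    have : star x ⬝ᵥ X *ᵥ x = star (R⁻¹ *ᵥ x) ⬝ᵥ B *ᵥ (R⁻¹ *ᵥ x) := by
      simp only [hXdef, ← Matrix.mulVec_mulVec, star_trivial]
      rw [Matrix.dotProduct_mulVec, hvm]
    rw [this]
    exact hB.dotProduct_mulVec_pos hy
  have hdetX : X.det = B.det / A.det := by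
    have h1 : X.det = R⁻¹.det * B.det * R⁻¹.det := by
      rw [hXdef, Matrix.det_mul, Matrix.det_mul]
    have h2 : R⁻¹.det = (R.det)⁻¹ := by
      rw [Matrix.det_nonsing_inv, Ring.inverse_eq_inv]
    have h3 : A.det = R.det * R.det := by rw [← hRR, Matrix.det_mul]
    rw [h1, h2, h3]
    field_simp
  have htrX : X.trace = (A⁻¹ * B).trace := by
    rw [hXdef, Matrix.trace_mul_cycle, hRinv]
  have := my_logdet_le hXpd
  rw [hdetX, Real.log_div hdetB.ne' hdetA.ne', htrX] at this
  exact this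

end

lemma my_oneSided (n N : ℕ)
    (M : Fin N → Matrix (Fin n) (Fin n) ℝ)
    (C : ℝ) (hC : 0 < C)
    (hM : ∀ i, (M i).PosSemidef) (htr : ∀ i, (M i).trace ≤ C)
    (lmin : ℝ) (hlmin : 0 < lmin)
    (w w' : Fin N → ℝ)
    (hFw : ∀ x : Fin n → ℝ, lmin * (∑ k, x k ^ 2) ≤ x ⬝ᵥ (∑ i, w i • M i).mulVec x)
    (hFw' : ∀ x : Fin n → ℝ, lmin * (∑ k, x k ^ 2) ≤ x ⬝ᵥ (∑ i, w' i • M i).mulVec x) :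
    Real.log (∑ i, w' i • M i).det - Real.log (∑ i, w i • M i).det ≤
      (C / lmin) * ∑ i, |w' i - w i| := by
  set A := ∑ i, w i • M i with hAdef
  set B := ∑ i, w' i • M i with hBdef
  have hsmulh : ∀ (v : Fin N → ℝ) i, (v i • M i).IsHermitian := by
    intro v i
    rw [Matrix.IsHermitian, Matrix.conjTranspose_smul, (hM i).1.eq, star_trivial]
  have hAh : A.IsHermitian := by
    rw [Matrix.IsHermitian, hAdef, Matrix.conjTranspose_sum]
    exact Finset.sum_congr rfl fun i _ => hsmulh w i
  have hBh : B.IsHermitian := by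
    rw [Matrix.IsHermitian, hBdef, Matrix.conjTranspose_sum]
    exact Finset.sum_congr rfl fun i _ => hsmulh w' i
  have hApd : A.PosDef := my_posdef_of_bound hAh hlmin hFw
  have hBpd : B.PosDef := my_posdef_of_bound hBh hlmin hFw'
  have hmain := my_logdet_diff_le hApd hBpd
  -- trace computations
  have htrmul : ∀ (v : Fin N → ℝ),
      (A⁻¹ * ∑ i, v i • M i).trace = ∑ i, v i * (A⁻¹ * M i).trace := by
    intro v
    rw [Finset.mul_sum, Matrix.trace_sum]
    exact Finset.sum_congr rfl fun i _ => by
      rw [Matrix.mul_smul, Matrix.trace_smul]; rfl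
  have hAA : (A⁻¹ * A).trace = (n : ℝ) := by
    rw [Matrix.nonsing_inv_mul _ (isUnit_iff_ne_zero.2 hApd.det_pos.ne'), Matrix.trace_one]
    simp
  have hbd : ∀ i, 0 ≤ (A⁻¹ * M i).trace ∧ (A⁻¹ * M i).trace ≤ C / lmin := by
    intro i
    obtain ⟨h1, h2⟩ := my_trace_inv_mul_bound hAh hlmin hFw (hM i)
    refine ⟨h1, h2.trans ?_⟩
    rw [div_eq_mul_inv C lmin, one_div, mul_comm C lmin⁻¹]
    exact mul_le_mul_of_nonneg_left (htr i) (by positivity)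
  have hkey : (A⁻¹ * B).trace - (n : ℝ) = ∑ i, (w' i - w i) * (A⁻¹ * M i).trace := by
    rw [hBdef, htrmul w', ← hAA]
    conv_lhs => rw [hAdef, htrmul w]
    rw [← Finset.sum_sub_distrib]
    exact Finset.sum_congr rfl fun i _ => by ring
  refine hmain.trans ?_
  rw [hkey, Finset.mul_sum]
  refine Finset.sum_le_sum fun i _ => ?_
  obtain ⟨h1, h2⟩ := hbd i
  calc (w' i - w i) * (A⁻¹ * M i).trace ≤ |w' i - w i| * (A⁻¹ * M i).trace :=
        mul_le_mul_of_nonneg_right (le_abs_self _) h1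
    _ ≤ |w' i - w i| * (C / lmin) := mul_le_mul_of_nonneg_left h2 (abs_nonneg _)
    _ = C / lmin * |w' i - w i| := mul_comm _ _
/-- abstract sensitivity of the D-optimal objective: if each `M i`
is PSD with `trace (M i) ≤ C`, `F v = ∑ i, v i • M i`, and both `F w` and `F w'`
have smallest eigenvalue at least `λmin > 0` (as quadratic forms), then
`|log det F w' − log det F w| ≤ (C/λmin) * ‖w' − w‖₁`. -/
theorem logdet_sensitivity_bound
    (n N : ℕ) (hn : 1 ≤ n) (hN : 1 ≤ N)
    (M : Fin N → Matrix (Fin n) (Fin n) ℝ)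
    (C : ℝ) (hC : 0 < C)
    (hM : ∀ i, (M i).PosSemidef) (htr : ∀ i, (M i).trace ≤ C)
    (lmin : ℝ) (hlmin : 0 < lmin)
    (w w' : Fin N → ℝ)
    (hw : (∀ i, 0 ≤ w i) ∧ ∑ i, w i = 1)
    (hw' : (∀ i, 0 ≤ w' i) ∧ ∑ i, w' i = 1)
    (hFw : ∀ x : Fin n → ℝ, lmin * (∑ k, x k ^ 2) ≤ x ⬝ᵥ (∑ i, w i • M i).mulVec x)
    (hFw' : ∀ x : Fin n → ℝ, lmin * (∑ k, x k ^ 2) ≤ x ⬝ᵥ (∑ i, w' i • M i).mulVec x) :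
    |Real.log (∑ i, w' i • M i).det - Real.log (∑ i, w i • M i).det| ≤
      (C / lmin) * ∑ i, |w' i - w i| := by
  rw [abs_sub_le_iff]
  constructor
  · exact my_oneSided n N M C hC hM htr lmin hlmin w w' hFw hFw'
  · have h := my_oneSided n N M C hC hM htr lmin hlmin w' w hFw' hFw
    have heq : ∑ i, |w i - w' i| = ∑ i, |w' i - w i| :=
      Finset.sum_congr rfl fun i _ => abs_sub_comm _ _
    rwa [heq] at h
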